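/- Let Ŝ be the τ-nice sampling on [n] with 1 ≤ τ ≤ n. Then its probability matrix is P = (τ/n)((1−β)I + βE), where β = (τ−1)/max(n−1,1), I is the identity and E the all-ones matrix. -/

import Mathlib

open Finset Matrix BigOperators

/-- Probability matrix of a sampling given by its probability mass function `p` on
subsets of `[n]`: `P i j = Prob({i,j} ⊆ Ŝ)`. -/
noncomputable def probMatrixPMF {n : ℕ} (p : Finset (Fin n) → ℝ) : Matrix (Fin n) (Fin n) ℝ :=
  fun i j => ∑ S : Finset (Fin n), if i ∈ S ∧ j ∈ S then p S else 0

/-- The τ-nice sampling: uniform over subsets of cardinality τ. -/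
noncomputable def tauNice (n τ : ℕ) : Finset (Fin n) → ℝ :=
  fun S => if S.card = τ then 1 / (n.choose τ : ℝ) else 0

lemma count_contain {n : ℕ} (T : Finset (Fin n)) (τ : ℕ) (h : T.card ≤ τ) :
    ((Finset.univ : Finset (Finset (Fin n))).filter (fun S => S.card = τ ∧ T ⊆ S)).card
      = (n - T.card).choose (τ - T.card) := by
  have hc : (Finset.univ \ T).card = n - T.card := by
    rw [card_sdiff_of_subset (subset_univ T), card_univ, Fintype.card_fin]
  rw [← hc, ← Finset.card_powersetCard (τ - T.card) (Finset.univ \ T)]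
  apply Finset.card_bij' (fun S _ => S \ T) (fun S _ => S ∪ T)
  · intro S hS
    simp only [mem_filter, mem_univ, true_and] at hS
    simp only [mem_powersetCard]
    constructor
    · exact sdiff_subset_sdiff (subset_univ S) le_rfl
    · rw [card_sdiff_of_subset hS.2, hS.1]
  · intro S hS
    simp only [mem_powersetCard] at hS
    simp only [mem_filter, mem_univ, true_and]
    have hd : Disjoint S T := by
      refine disjoint_left.2 fun a ha hat => ?_
      have := hS.1 ha
      simp [mem_sdiff] at this
      exact this hat
    constructor
    · rw [card_union_of_disjoint hd, hS.2]
      omega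
    · exact subset_union_right
  · intro S hS
    simp only [mem_filter, mem_univ, true_and] at hS
    exact sdiff_union_of_subset hS.2
  · intro S hS
    simp only [mem_powersetCard] at hS
    refine union_sdiff_cancel_right ?_
    refine disjoint_left.2 fun a ha hat => ?_
    have := hS.1 ha
    simp [mem_sdiff] at this
    exact this hat

lemma entry_eq {n τ : ℕ} (i j : Fin n) :
    probMatrixPMF (tauNice n τ) i j =
      (((Finset.univ : Finset (Finset (Fin n))).filter
          (fun S => S.card = τ ∧ ({i, j} : Finset (Fin n)) ⊆ S)).card : ℝ) / (n.choose τ : ℝ) := by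
  unfold probMatrixPMF tauNice
  rw [Finset.sum_congr rfl (g := fun S => if S.card = τ ∧ ({i, j} : Finset (Fin n)) ⊆ S then 1 / (n.choose τ : ℝ) else 0) (fun S _ => ?_), Finset.sum_ite, Finset.sum_const,
    Finset.sum_const_zero, add_zero, nsmul_eq_mul, mul_one_div]
  · by_cases h : S.card = τ ∧ ({i, j} : Finset (Fin n)) ⊆ S
    · rw [if_pos h]
      have : i ∈ S ∧ j ∈ S := by
        have := h.2
        simp [Finset.insert_subset_iff] at this
        exact this
      rw [if_pos this, if_pos h.1]
    · rw [if_neg h]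
      by_cases h1 : i ∈ S ∧ j ∈ S
      · rw [if_pos h1]
        have h2 : ¬ S.card = τ := fun hc => h ⟨hc, by simp [Finset.insert_subset_iff, h1.1, h1.2]⟩
        rw [if_neg h2]
      · rw [if_neg h1]

theorem probMatrix_tauNice {n τ : ℕ} (hτ1 : 1 ≤ τ) (hτn : τ ≤ n) :
    probMatrixPMF (tauNice n τ) =
      ((τ : ℝ) / n) •
        ((1 - ((τ : ℝ) - 1) / (max (n - 1) 1 : ℕ)) • (1 : Matrix (Fin n) (Fin n) ℝ) +
          (((τ : ℝ) - 1) / (max (n - 1) 1 : ℕ)) • (Matrix.of fun _ _ => (1:ℝ) : Matrix (Fin n) (Fin n) ℝ)) := by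
  have hn1 : 1 ≤ n := le_trans hτ1 hτn
  have hC : (0:ℝ) < (n.choose τ : ℝ) := by exact_mod_cast Nat.choose_pos hτn
  have hn0 : (0:ℝ) < (n:ℝ) := by exact_mod_cast hn1
  ext i j
  rw [entry_eq]
  simp only [Matrix.smul_apply, Matrix.add_apply, Matrix.one_apply, Matrix.of_apply,
    smul_eq_mul]
  by_cases hij : i = j
  · subst hij
    rw [if_pos rfl]
    have hT : ({i, i} : Finset (Fin n)).card = 1 := by simp
    have : ((Finset.univ : Finset (Finset (Fin n))).filter
        (fun S => S.card = τ ∧ ({i, i} : Finset (Fin n)) ⊆ S)).card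
        = (n - 1).choose (τ - 1) := by
      rw [count_contain _ _ (by rw [hT]; exact hτ1), hT]
    rw [this]
    have hnat : n * (n - 1).choose (τ - 1) = n.choose τ * τ := by
      obtain ⟨m, rfl⟩ := Nat.exists_eq_add_of_le hn1
      obtain ⟨k, rfl⟩ := Nat.exists_eq_add_of_le hτ1
      simpa [Nat.add_comm, Nat.add_one_mul_choose_eq] using (Nat.add_one_mul_choose_eq m k)
    have hnat' : ((n:ℝ)) * ((n - 1).choose (τ - 1) : ℝ) = (n.choose τ : ℝ) * τ := by
      exact_mod_cast hnat
    field_simp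
    ring_nf
    ring_nf at hnat'
    nlinarith [hnat']
  · rw [if_neg hij]
    have hT : ({i, j} : Finset (Fin n)).card = 2 := by
      rw [card_insert_of_notMem (by simp [hij]), card_singleton]
    by_cases hτ2 : 2 ≤ τ
    · have hn2 : 2 ≤ n := le_trans hτ2 hτn
      have hcount : ((Finset.univ : Finset (Finset (Fin n))).filter
          (fun S => S.card = τ ∧ ({i, j} : Finset (Fin n)) ⊆ S)).card
          = (n - 2).choose (τ - 2) := by
        rw [count_contain _ _ (by rw [hT]; exact hτ2), hT]
      rw [hcount]
      have hmax : (max (n - 1) 1 : ℕ) = n - 1 := by omega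
      rw [hmax]
      have hnat : n * (n - 1) * (n - 2).choose (τ - 2) = n.choose τ * (τ * (τ - 1)) := by
        have h1 : n * (n - 1).choose (τ - 1) = n.choose τ * τ := by
          obtain ⟨m, rfl⟩ := Nat.exists_eq_add_of_le hn1
          obtain ⟨k, rfl⟩ := Nat.exists_eq_add_of_le hτ1
          simpa [Nat.add_comm] using (Nat.add_one_mul_choose_eq m k)
        have h2 : (n - 1) * (n - 2).choose (τ - 2) = (n - 1).choose (τ - 1) * (τ - 1) := by
          obtain ⟨m, hm⟩ := Nat.exists_eq_add_of_le hn2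
          obtain ⟨k, hk⟩ := Nat.exists_eq_add_of_le hτ2
          subst hm hk
          have := Nat.add_one_mul_choose_eq m k
          simp only [Nat.add_comm 2, Nat.add_sub_cancel]
          have e1 : m + 2 - 1 = m + 1 := by omega
          have e2 : k + 2 - 1 = k + 1 := by omega
          rw [e1, e2]
          simpa [Nat.add_comm] using this
        calc n * (n - 1) * (n - 2).choose (τ - 2)
            = n * ((n - 1) * (n - 2).choose (τ - 2)) := by ring
          _ = n * ((n - 1).choose (τ - 1) * (τ - 1)) := by rw [h2]
          _ = n * (n - 1).choose (τ - 1) * (τ - 1) := by ring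
          _ = n.choose τ * τ * (τ - 1) := by rw [h1]
          _ = n.choose τ * (τ * (τ - 1)) := by ring
      have hnat' : (n:ℝ) * ((n:ℝ) - 1) * ((n - 2).choose (τ - 2) : ℝ)
          = (n.choose τ : ℝ) * ((τ:ℝ) * ((τ:ℝ) - 1)) := by
        have h' : (n:ℝ) * (((n-1:ℕ)):ℝ) * ((n - 2).choose (τ - 2) : ℝ)
            = (n.choose τ : ℝ) * ((τ:ℝ) * (((τ-1:ℕ)):ℝ)) := by exact_mod_cast hnat
        rwa [Nat.cast_sub hn1, Nat.cast_sub hτ1, Nat.cast_one] at h'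
      have hcast : ((n - 1 : ℕ) : ℝ) = (n:ℝ) - 1 := by
        push_cast [Nat.cast_sub hn1]; ring
      rw [hcast]
      have hne : (n:ℝ) - 1 ≠ 0 := by
        have : (2:ℝ) ≤ (n:ℝ) := by exact_mod_cast hn2
        linarith
      field_simp
      nlinarith [hnat']
    · have hτeq : τ = 1 := by omega
      subst hτeq
      have : ((Finset.univ : Finset (Finset (Fin n))).filter
          (fun S => S.card = 1 ∧ ({i, j} : Finset (Fin n)) ⊆ S)).card = 0 := by
        rw [Finset.card_eq_zero, Finset.filter_eq_empty_iff]
        intro S _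
        rintro ⟨h1, h2⟩
        have := Finset.card_le_card h2
        omega
      rw [this]
      simp
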